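/- Let Q be a quadratic form of signature (p,q) on R^(p+q) with p ≥ q, let S be a maximal positive definite subspace and T = S^⊥ the complementary maximal negative definite subspace, with orthogonal projections π_S, π_T and positive definite forms N_S = Q|_S, N_T = -Q|_T. Then the map sending a maximal totally isotropic subspace V to the linear map f_V = π_S ∘ (π_T|_V)^(-1) is a well-defined bijection from the set of maximal totally isotropic subspaces of R^(p,q) to the set of linear isometries from (T, N_T) to (S, N_S), with inverse f ↦ V_f = { t + f(t) : t ∈ T }. -/

import Mathlib

open Module

noncomputable section

/-- The map `V ↦ f_V = π_S ∘ (π_T|_V)⁻¹` is a well-defined bijection from the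
set of maximal totally isotropic subspaces of `ℝ^{p,q}` to the set of linear isometries from
`(T, N_T)` to `(S, N_S)`, with inverse `f ↦ V_f = { t + f t : t ∈ T }`. -/
theorem mtis_isometry_bijection (p q : ℕ) (hpq : q ≤ p)
    (Q : QuadraticForm ℝ (Fin (p + q) → ℝ))
    (S T : Submodule ℝ (Fin (p + q) → ℝ))
    (hST : IsCompl S T)
    (hSdim : finrank ℝ S = p) (hTdim : finrank ℝ T = q)
    (hSpos : ∀ x ∈ S, x ≠ 0 → 0 < Q x)
    (hTneg : ∀ x ∈ T, x ≠ 0 → Q x < 0)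
    (hQdec : ∀ x, Q x = Q ((S.linearProjOfIsCompl T hST x : Fin (p + q) → ℝ))
        + Q ((T.linearProjOfIsCompl S hST.symm x : Fin (p + q) → ℝ))) :
    ∃ Φ : {V : Submodule ℝ (Fin (p + q) → ℝ) // (∀ x ∈ V, Q x = 0) ∧ finrank ℝ V = q} ≃
          {f : T →ₗ[ℝ] S // ∀ t : T, Q ((f t : Fin (p + q) → ℝ)) = - Q ((t : Fin (p + q) → ℝ))},
      (∀ V : {V : Submodule ℝ (Fin (p + q) → ℝ) // (∀ x ∈ V, Q x = 0) ∧ finrank ℝ V = q},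
        ∀ v ∈ V.1, ((Φ V).1 (T.linearProjOfIsCompl S hST.symm v) : Fin (p + q) → ℝ)
          = (S.linearProjOfIsCompl T hST v : Fin (p + q) → ℝ)) ∧
      (∀ f : {f : T →ₗ[ℝ] S // ∀ t : T, Q ((f t : Fin (p + q) → ℝ)) = - Q ((t : Fin (p + q) → ℝ))},
        (Φ.symm f).1 = LinearMap.range (T.subtype + S.subtype ∘ₗ f.1)) := by
  classical
  set πS := S.linearProjOfIsCompl T hST with hπS
  set πT := T.linearProjOfIsCompl S hST.symm with hπT
  set MTIS := {V : Submodule ℝ (Fin (p + q) → ℝ) // (∀ x ∈ V, Q x = 0) ∧ finrank ℝ V = q}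
    with hMTIS
  set ISO := {f : T →ₗ[ℝ] S //
      ∀ t : T, Q ((f t : Fin (p + q) → ℝ)) = - Q ((t : Fin (p + q) → ℝ))} with hISO
  -- π_T restricted to V is bijective onto T
  have hbij : ∀ V : MTIS, Function.Bijective (πT ∘ₗ V.1.subtype) := by
    intro V
    have hinj : Function.Injective (πT ∘ₗ V.1.subtype) := by
      rw [← LinearMap.ker_eq_bot]
      rw [Submodule.eq_bot_iff]
      rintro ⟨x, hxV⟩ hx
      have hx0 : πT x = 0 := hx
      have hxS : x ∈ S := by
        rwa [hπT, Submodule.linearProjOfIsCompl, Submodule.projectionOnto_apply_eq_zero_iff] at hx0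
      have : x = 0 := by
        by_contra hne
        exact absurd (V.2.1 x hxV) (ne_of_gt (hSpos x hxS hne))
      exact Subtype.ext this
    refine ⟨hinj, ?_⟩
    rw [← LinearMap.range_eq_top]
    have := LinearMap.injective_iff_surjective_of_finrank_eq_finrank
      (V := V.1) (V₂ := T) (by rw [V.2.2, hTdim]) (f := πT ∘ₗ V.1.subtype)
    rw [← LinearMap.range_eq_top] at this
    exact this.mp hinj
  -- the linear equivalence V ≃ₗ T
  let e : (V : MTIS) → (V.1 ≃ₗ[ℝ] T) := fun V => LinearEquiv.ofBijective _ (hbij V)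
  -- the forward map
  let F : (V : MTIS) → (T →ₗ[ℝ] S) := fun V => (πS ∘ₗ V.1.subtype) ∘ₗ (e V).symm.toLinearMap
  have hFkey : ∀ (V : MTIS) (v : Fin (p + q) → ℝ) (hv : v ∈ V.1),
      F V (πT v) = πS v := by
    intro V v hv
    have h1 : e V ⟨v, hv⟩ = πT v := rfl
    have h2 : (e V).symm (πT v) = ⟨v, hv⟩ := by
      rw [← h1, LinearEquiv.symm_apply_apply]
    show πS (((e V).symm (πT v) : Fin (p + q) → ℝ)) = πS v
    rw [h2]
  -- F V is an isometry
  have hFiso : ∀ (V : MTIS) (t : T),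
      Q ((F V t : Fin (p + q) → ℝ)) = - Q ((t : Fin (p + q) → ℝ)) := by
    intro V t
    obtain ⟨v, hvt⟩ := (hbij V).2 t
    have hvt' : πT (v : Fin (p + q) → ℝ) = t := hvt
    have h1 : F V t = πS (v : Fin (p + q) → ℝ) := by rw [← hvt']; exact hFkey V v v.2
    have h0 : Q (v : Fin (p + q) → ℝ) = 0 := V.2.1 v v.2
    have := hQdec (v : Fin (p + q) → ℝ)
    rw [h0, hvt'] at this
    rw [h1]
    linarith
  -- the inverse map: a submodule
  let G : (f : ISO) → Submodule ℝ (Fin (p + q) → ℝ) := fun f =>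
    LinearMap.range (T.subtype + S.subtype ∘ₗ f.1)
  have hGmem : ∀ (f : ISO) (t : T),
      ((t : Fin (p + q) → ℝ) + (f.1 t : Fin (p + q) → ℝ)) ∈ G f :=
    fun f t => ⟨t, rfl⟩
  have hπTG : ∀ (f : ISO) (t : T),
      πT ((t : Fin (p + q) → ℝ) + (f.1 t : Fin (p + q) → ℝ)) = t := by
    intro f t
    rw [hπT, Submodule.linearProjOfIsCompl, map_add, Submodule.projectionOnto_apply_left hST.symm t,
      Submodule.projectionOnto_apply_of_mem_right hST.symm (f.1 t).2, add_zero]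
  have hπSG : ∀ (f : ISO) (t : T),
      πS ((t : Fin (p + q) → ℝ) + (f.1 t : Fin (p + q) → ℝ)) = f.1 t := by
    intro f t
    rw [hπS, Submodule.linearProjOfIsCompl, map_add, Submodule.projectionOnto_apply_of_mem_right hST t.2,
      Submodule.projectionOnto_apply_left hST (f.1 t), zero_add]
  -- G f is totally isotropic
  have hGiso : ∀ (f : ISO), ∀ x ∈ G f, Q x = 0 := by
    rintro f x ⟨t, rfl⟩
    have hx : (T.subtype + S.subtype ∘ₗ f.1) t
        = (t : Fin (p + q) → ℝ) + (f.1 t : Fin (p + q) → ℝ) := rfl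
    rw [hx, hQdec, hπSG f t, hπTG f t, f.2 t]
    ring
  -- G f has dimension q
  have hGdim : ∀ (f : ISO), finrank ℝ (G f) = q := by
    intro f
    have hinj : Function.Injective (T.subtype + S.subtype ∘ₗ f.1) := by
      intro a b hab
      have hx : ∀ t : T, (T.subtype + S.subtype ∘ₗ f.1) t
          = (t : Fin (p + q) → ℝ) + (f.1 t : Fin (p + q) → ℝ) := fun _ => rfl
      have h2 : πT ((T.subtype + S.subtype ∘ₗ f.1) a)
          = πT ((T.subtype + S.subtype ∘ₗ f.1) b) := by rw [hab]
      rwa [hx a, hx b, hπTG f a, hπTG f b] at h2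
    rw [show G f = LinearMap.range (T.subtype + S.subtype ∘ₗ f.1) from rfl,
      LinearMap.finrank_range_of_inj hinj, hTdim]
  let Ψ : MTIS ≃ ISO :=
    { toFun := fun V => ⟨F V, hFiso V⟩
      invFun := fun f => ⟨G f, hGiso f, hGdim f⟩
      left_inv := by
        rintro V
        apply Subtype.ext
        show G ⟨F V, hFiso V⟩ = V.1
        apply Submodule.eq_of_le_of_finrank_le
        · rintro x ⟨t, rfl⟩
          obtain ⟨v, hvt⟩ := (hbij V).2 t
          have hvt' : πT (v : Fin (p + q) → ℝ) = t := hvt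
          have h1 : F V t = πS (v : Fin (p + q) → ℝ) := by rw [← hvt']; exact hFkey V v v.2
          have hx : (T.subtype + S.subtype ∘ₗ F V) t
              = (t : Fin (p + q) → ℝ) + (F V t : Fin (p + q) → ℝ) := rfl
          rw [hx, h1, ← hvt']
          have hsum := Submodule.projection_add_projection_eq_self hST
            (v : Fin (p + q) → ℝ)
          have h2 : ((T.linearProjOfIsCompl S hST.symm (v : Fin (p + q) → ℝ)
                : Fin (p + q) → ℝ))
              + (S.linearProjOfIsCompl T hST (v : Fin (p + q) → ℝ) : Fin (p + q) → ℝ)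
              = (v : Fin (p + q) → ℝ) := (add_comm _ _).trans hsum
          rw [hπS, hπT, h2]
          exact v.2
        · rw [V.2.2, hGdim ⟨F V, hFiso V⟩]
      right_inv := by
        rintro f
        apply Subtype.ext
        apply LinearMap.ext
        intro t
        show F ⟨G f, hGiso f, hGdim f⟩ t = f.1 t
        have hmem := hGmem f t
        have := hFkey ⟨G f, hGiso f, hGdim f⟩ _ hmem
        rw [hπTG f t, hπSG f t] at this
        exact this }
  refine ⟨Ψ, ?_, ?_⟩
  · intro V v hv
    exact congrArg _ (hFkey V v hv)
  · intro f
    rfl
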